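/- arXiv:2111.03509 — 5 statements merged into one kernel-verified Lean document; each statement's English description precedes it below -/
import Mathlib

section
/- Let X be a Banach space and Ψ : X → [0,∞] a convex function. Then Ψ is coercive (i.e., ‖vₖ‖ → ∞ implies Ψ(vₖ) → ∞ for every sequence (vₖ)) if and only if there exist constants C > 0 and D ∈ ℝ such that ‖v‖ ≤ C·Ψ(v) + D for all v ∈ X. -/
open ENNReal Filter

/-- A convex functional `Ψ : X → [0,∞]` is coercive
(`‖vₖ‖ → ∞ ⟹ Ψ(vₖ) → ∞`) iff there are `C > 0` and `D ∈ ℝ` with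
`‖v‖ ≤ C Ψ(v) + D` for all `v`. -/
theorem stmt_1 {X : Type*} [NormedAddCommGroup X] [NormedSpace ℝ X] [CompleteSpace X]
    (Ψ : X → ℝ≥0∞)
    (hconv : ∀ x y : X, ∀ t : ℝ, 0 ≤ t → t ≤ 1 →
      Ψ (t • x + (1 - t) • y) ≤ ENNReal.ofReal t * Ψ x + ENNReal.ofReal (1 - t) * Ψ y) :
    (∀ v : ℕ → X, Tendsto (fun k => ‖v k‖) atTop atTop →
        Tendsto (fun k => Ψ (v k)) atTop (nhds ⊤)) ↔
    ∃ C : ℝ, 0 < C ∧ ∃ D : ℝ, ∀ v : X,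
      ENNReal.ofReal ‖v‖ ≤ ENNReal.ofReal C * Ψ v + ENNReal.ofReal D := by
  constructor
  · intro hcoer
    by_cases hfin : ∃ x0, Ψ x0 ≠ ⊤
    · obtain ⟨x0, hx0⟩ := hfin
      -- Step 1: a level `R` beyond which Ψ ≥ Ψ x0 + 1
      have key : ∃ R : ℝ, 1 ≤ R ∧ ∀ v : X, R ≤ ‖v‖ → Ψ x0 + 1 ≤ Ψ v := by
        by_contra hcon
        push_neg at hcon
        choose f hf1 hf2 using fun k : ℕ => hcon ((k : ℝ) + 1)
          (by have := Nat.cast_nonneg (α := ℝ) k; linarith)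
        have hv : Tendsto (fun k => ‖f k‖) atTop atTop :=
          tendsto_atTop_mono (fun k => hf1 k)
            (tendsto_atTop_add_const_right _ 1 tendsto_natCast_atTop_atTop)
        have htop : Ψ x0 + 1 < ⊤ := ENNReal.add_lt_top.2 ⟨hx0.lt_top, one_lt_top⟩
        obtain ⟨k, hk⟩ := ((hcoer f hv).eventually (Ioi_mem_nhds htop)).exists
        exact absurd hk (not_lt.2 (hf2 k).le)
      obtain ⟨R, hR1, hR⟩ := key
      set r : ℝ := R + ‖x0‖ with hr
      have hr0 : 0 < r := by have := norm_nonneg x0; simp only [hr]; linarith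
      refine ⟨r, hr0, r + ‖x0‖, fun v => ?_⟩
      by_cases hv : r ≤ ‖v - x0‖
      · have hvn : 0 < ‖v - x0‖ := lt_of_lt_of_le hr0 hv
        set t : ℝ := r / ‖v - x0‖ with htd
        have ht0 : 0 < t := div_pos hr0 hvn
        have ht1 : t ≤ 1 := (div_le_one hvn).2 hv
        have hwe : t • v + (1 - t) • x0 = x0 + t • (v - x0) := by
          rw [smul_sub, sub_smul, one_smul]; abel
        have htv : ‖t • (v - x0)‖ = r := by
          rw [norm_smul, Real.norm_of_nonneg ht0.le, htd, div_mul_cancel₀ _ hvn.ne']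
        have hwn : R ≤ ‖t • v + (1 - t) • x0‖ := by
          rw [hwe]
          have h1 := norm_sub_le (x0 + t • (v - x0)) x0
          have h2 : (x0 + t • (v - x0)) - x0 = t • (v - x0) := by abel
          rw [h2, htv] at h1
          simp only [hr] at *
          linarith
        have hM : Ψ x0 + 1 ≤ Ψ (t • v + (1 - t) • x0) := hR _ hwn
        have hchain : Ψ x0 + 1 ≤ ENNReal.ofReal t * Ψ v + Ψ x0 := by
          refine hM.trans ((hconv v x0 t ht0.le ht1).trans ?_)
          gcongr
          calc ENNReal.ofReal (1 - t) * Ψ x0 ≤ 1 * Ψ x0 := by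
                gcongr
                exact ENNReal.ofReal_le_one.2 (by linarith)
            _ = Ψ x0 := one_mul _
        have hone : (1 : ℝ≥0∞) ≤ ENNReal.ofReal t * Ψ v := by
          rw [add_comm (Ψ x0) 1] at hchain
          exact (ENNReal.add_le_add_iff_right hx0).1 hchain
        have h1 : ENNReal.ofReal (1 / t) ≤ Ψ v := by
          calc ENNReal.ofReal (1 / t) = ENNReal.ofReal (1 / t) * 1 := (mul_one _).symm
            _ ≤ ENNReal.ofReal (1 / t) * (ENNReal.ofReal t * Ψ v) :=
                mul_le_mul_right hone _
            _ = ENNReal.ofReal ((1 / t) * t) * Ψ v := by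
                rw [ENNReal.ofReal_mul (by positivity), mul_assoc]
            _ = Ψ v := by rw [one_div_mul_cancel ht0.ne', ENNReal.ofReal_one, one_mul]
        have h2 : ENNReal.ofReal ‖v - x0‖ ≤ ENNReal.ofReal r * Ψ v := by
          have hrt : ‖v - x0‖ = r * (1 / t) := by
            rw [htd]; field_simp
          rw [hrt, ENNReal.ofReal_mul hr0.le]
          exact mul_le_mul_right h1 _
        calc ENNReal.ofReal ‖v‖ ≤ ENNReal.ofReal (‖v - x0‖ + ‖x0‖) := by
              refine ENNReal.ofReal_le_ofReal ?_
              have := norm_add_le (v - x0) x0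
              rwa [sub_add_cancel] at this
          _ = ENNReal.ofReal ‖v - x0‖ + ENNReal.ofReal ‖x0‖ :=
              ENNReal.ofReal_add (norm_nonneg _) (norm_nonneg _)
          _ ≤ ENNReal.ofReal r * Ψ v + ENNReal.ofReal (r + ‖x0‖) :=
              add_le_add h2 (ENNReal.ofReal_le_ofReal (by have := norm_nonneg x0; linarith))
      · push_neg at hv
        have hvle : ‖v‖ ≤ r + ‖x0‖ := by
          have h1 := norm_add_le (v - x0) x0
          rw [sub_add_cancel] at h1
          linarith
        calc ENNReal.ofReal ‖v‖ ≤ ENNReal.ofReal (r + ‖x0‖) :=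
              ENNReal.ofReal_le_ofReal hvle
          _ ≤ ENNReal.ofReal r * Ψ v + ENNReal.ofReal (r + ‖x0‖) := le_add_self
    · push_neg at hfin
      refine ⟨1, one_pos, 0, fun v => ?_⟩
      simp [hfin v]
  · rintro ⟨C, hC, D, hCD⟩ v hv
    rw [ENNReal.tendsto_nhds_top_iff_nat]
    intro n
    filter_upwards [hv.eventually_gt_atTop (C * ((n : ℝ) + 1) + |D|)] with k hk
    have hb : ENNReal.ofReal ‖v k‖ ≤ ENNReal.ofReal C * Ψ (v k) + ENNReal.ofReal |D| := by
      refine (hCD (v k)).trans ?_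
      gcongr
      exact le_abs_self D
    have hlt : ENNReal.ofReal (C * ((n : ℝ) + 1) + |D|) < ENNReal.ofReal ‖v k‖ := by
      refine (ENNReal.ofReal_lt_ofReal_iff_of_nonneg ?_).2 hk
      have h1 : 0 ≤ C * ((n : ℝ) + 1) := by positivity
      have h2 : 0 ≤ |D| := abs_nonneg D
      linarith
    have hsplit : ENNReal.ofReal (C * ((n : ℝ) + 1) + |D|)
        = ENNReal.ofReal C * ENNReal.ofReal ((n : ℝ) + 1) + ENNReal.ofReal |D| := by
      rw [ENNReal.ofReal_add (by positivity) (abs_nonneg D), ENNReal.ofReal_mul hC.le]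
    have h3 : ENNReal.ofReal C * ENNReal.ofReal ((n : ℝ) + 1) + ENNReal.ofReal |D|
        < ENNReal.ofReal C * Ψ (v k) + ENNReal.ofReal |D| :=
      lt_of_lt_of_le (hsplit ▸ hlt) hb
    have h4 : ENNReal.ofReal C * ENNReal.ofReal ((n : ℝ) + 1)
        < ENNReal.ofReal C * Ψ (v k) :=
      (ENNReal.add_lt_add_iff_right ENNReal.ofReal_ne_top).1 h3
    have h5 : ENNReal.ofReal ((n : ℝ) + 1) < Ψ (v k) := by
      have hC0 : ENNReal.ofReal C ≠ 0 := (ENNReal.ofReal_pos.2 hC).ne'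
      exact (ENNReal.mul_lt_mul_iff_right hC0 ENNReal.ofReal_ne_top).1 h4
    refine lt_of_le_of_lt ?_ h5
    have : ENNReal.ofReal ((n : ℝ) + 1) = ((n : ℕ) : ℝ≥0∞) + 1 := by
      rw [ENNReal.ofReal_add (Nat.cast_nonneg n) zero_le_one,
        ENNReal.ofReal_natCast, ENNReal.ofReal_one]
    rw [this]
    exact le_add_right le_rfl
end

section
/- Let X be a Banach space, R : X → [0,∞] a functional, L ⊂ X a finite-dimensional subspace, G : X → L a map and C > 0, D ≥ 0 constants with ‖u − G(u)‖ ≤ C·R(u) + D for all u ∈ X. Let K ⊂ X be a closed subspace and P : X → K ∩ L a bounded linear projection onto K ∩ L. Then there exist constants C' > 0 and D' ≥ 0, with D' = 0 in case D = 0, such that ‖u − P u‖ ≤ C'·R(u) + D' for all u ∈ K. -/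
open ENNReal Metric

/-- Key geometric fact: in a finite-dimensional subspace `L`, the distance to `K ⊓ L`
is controlled by the distance to a closed subspace `K`. -/
theorem keyDist {X : Type*} [NormedAddCommGroup X] [NormedSpace ℝ X]
    (L : Subspace ℝ X) [FiniteDimensional ℝ L]
    (K : Subspace ℝ X) (hK : IsClosed (K : Set X)) :
    ∃ c : ℝ, 0 ≤ c ∧ ∀ p : L, infDist (p : X) ((K ⊓ L : Subspace ℝ X) : Set X)
      ≤ c * infDist (p : X) (K : Set X) := by
  haveI : IsClosed (K : Set X) := hK
  set g : L →ₗ[ℝ] X ⧸ K := K.mkQ.comp L.subtype with hgdef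
  have hker : ∀ p : L, p ∈ LinearMap.ker g ↔ (p : X) ∈ K := by
    intro p
    simp [hgdef, Submodule.Quotient.mk_eq_zero]
  obtain ⟨E, hE⟩ := (LinearMap.ker g).exists_isCompl
  set g' := g.domRestrict E with hg'def
  have hker' : LinearMap.ker g' = ⊥ := by
    rw [LinearMap.ker_eq_bot']
    rintro ⟨z, hz⟩ h0
    have hz0 : z ∈ LinearMap.ker g := by
      have : g z = 0 := by simpa [hg'def] using h0
      exact this
    have : z ∈ (⊥ : Submodule ℝ L) := hE.inf_eq_bot ▸ ⟨hz0, hz⟩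
    simpa using this
  obtain ⟨c, hc0, hc⟩ := g'.exists_antilipschitzWith hker'
  refine ⟨c, c.coe_nonneg, fun p => ?_⟩
  -- decompose p = y + z with y ∈ ker g, z ∈ E
  have hp : p ∈ LinearMap.ker g ⊔ E := by rw [hE.sup_eq_top]; trivial
  obtain ⟨y, hy, z, hz, hyz⟩ := Submodule.mem_sup.mp hp
  have hyK : (y : X) ∈ ((K ⊓ L : Subspace ℝ X) : Set X) := ⟨(hker y).mp hy, y.2⟩
  have h1 : infDist (p : X) ((K ⊓ L : Subspace ℝ X) : Set X) ≤ ‖z‖ := by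
    have := infDist_le_dist_of_mem (x := (p : X)) hyK
    calc infDist (p : X) ((K ⊓ L : Subspace ℝ X) : Set X) ≤ dist (p : X) (y : X) := this
      _ = ‖p - y‖ := by rw [dist_eq_norm]; rfl
      _ = ‖z‖ := by rw [← hyz]; simp
  have h2 : ‖z‖ ≤ c * ‖g' ⟨z, hz⟩‖ := by
    have := hc.le_mul_dist ⟨z, hz⟩ 0
    simpa [dist_eq_norm] using this
  have h3 : g' ⟨z, hz⟩ = g p := by
    have hgy : g y = 0 := hy
    rw [← hyz]
    simp [hg'def, hgy]
  have h4 : ‖g p‖ ≤ infDist (p : X) (K : Set X) := by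
    by_contra hlt
    push_neg at hlt
    obtain ⟨w, hw, hww⟩ := (infDist_lt_iff ⟨0, K.zero_mem⟩).mp hlt
    refine absurd hww (not_lt.mpr ?_)
    have : g p = K.mkQ ((p : X) - w) := by
      have hw0 : K.mkQ w = 0 := (Submodule.Quotient.mk_eq_zero K).mpr hw
      simp [hgdef, map_sub, hw0]
    rw [this, dist_eq_norm, Submodule.mkQ_apply]
    exact Submodule.Quotient.norm_mk_le (S := K) _

  calc infDist (p : X) ((K ⊓ L : Subspace ℝ X) : Set X) ≤ ‖z‖ := h1
    _ ≤ c * ‖g' ⟨z, hz⟩‖ := h2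
    _ = c * ‖g p‖ := by rw [h3]
    _ ≤ c * infDist (p : X) (K : Set X) :=
        mul_le_mul_of_nonneg_left h4 c.coe_nonneg

/-- projection transfer, Lemma 4.1. Given `‖u − G u‖ ≤ C R(u) + D`
with `G : X → L`, `L` finite dimensional, `K ⊂ X` a closed subspace and
`P` a bounded linear projection onto `K ∩ L`, there are `C' > 0`, `D' ≥ 0`
(`D' = 0` if `D = 0`) with `‖u − P u‖ ≤ C' R(u) + D'` for all `u ∈ K`. -/
theorem stmt_3 {X : Type*} [NormedAddCommGroup X] [NormedSpace ℝ X] [CompleteSpace X]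
    (R : X → ℝ≥0∞) (L : Subspace ℝ X) [FiniteDimensional ℝ L]
    (G : X → X) (hG : ∀ u, G u ∈ L)
    (C D : ℝ) (hC : 0 < C) (hD : 0 ≤ D)
    (hest : ∀ u : X, ENNReal.ofReal ‖u - G u‖ ≤ ENNReal.ofReal C * R u + ENNReal.ofReal D)
    (K : Subspace ℝ X) (hK : IsClosed (K : Set X))
    (P : X →L[ℝ] X) (hPKL : ∀ x, P x ∈ K ⊓ L) (hPproj : ∀ x ∈ K ⊓ L, P x = x) :
    ∃ C' D' : ℝ, 0 < C' ∧ 0 ≤ D' ∧ (D = 0 → D' = 0) ∧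
      ∀ u ∈ K, ENNReal.ofReal ‖u - P u‖ ≤ ENNReal.ofReal C' * R u + ENNReal.ofReal D' := by
  obtain ⟨c, hc0, hc⟩ := keyDist L K hK
  set A : ℝ := (1 + ‖P‖) * (1 + c) with hAdef
  have hP0 : (0:ℝ) < 1 + ‖P‖ := by positivity
  have hA0 : 0 < A := by positivity
  have main : ∀ u ∈ K, ‖u - P u‖ ≤ A * ‖u - G u‖ := by
    intro u hu
    set d := infDist (G u) ((K ⊓ L : Subspace ℝ X) : Set X) with hddef
    have hd0 : 0 ≤ d := infDist_nonneg
    -- step 1 : ‖u - P u‖ ≤ (1+‖P‖) * (‖u - G u‖ + d)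
    have step1 : ‖u - P u‖ ≤ (1 + ‖P‖) * (‖u - G u‖ + d) := by
      refine le_of_forall_pos_le_add fun ε hε => ?_
      have hεP : 0 < ε / (1 + ‖P‖) := by positivity
      obtain ⟨q, hq, hqd⟩ := (infDist_lt_iff ⟨0, Submodule.zero_mem _⟩).mp
        (show d < d + ε / (1 + ‖P‖) by linarith)
      have hPq : P q = q := hPproj q hq
      have hqPu : ‖q - P u‖ ≤ ‖P‖ * ‖q - u‖ := by
        calc ‖q - P u‖ = ‖P (q - u)‖ := by rw [map_sub, hPq]
          _ ≤ ‖P‖ * ‖q - u‖ := P.le_opNorm _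
      have tri : ‖u - P u‖ ≤ ‖u - q‖ + ‖q - P u‖ := norm_sub_le_norm_sub_add_norm_sub u q (P u)
      have huq : ‖u - q‖ ≤ ‖u - G u‖ + ‖G u - q‖ := norm_sub_le_norm_sub_add_norm_sub u (G u) q
      have hGq : ‖G u - q‖ < d + ε / (1 + ‖P‖) := by rwa [← dist_eq_norm]
      have hqu : ‖q - u‖ = ‖u - q‖ := norm_sub_rev q u
      have hdiv : (1 + ‖P‖) * (ε / (1 + ‖P‖)) = ε := by field_simp
      nlinarith [norm_nonneg (u - G u), norm_nonneg (G u - q), norm_nonneg (u - q),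
        P.opNorm_nonneg, hdiv]
    -- step 2 : d ≤ c * ‖u - G u‖
    have step2 : d ≤ c * ‖u - G u‖ := by
      have h1 := hc ⟨G u, hG u⟩
      have h2 : infDist (G u) (K : Set X) ≤ ‖u - G u‖ := by
        calc infDist (G u) (K : Set X) ≤ dist (G u) u := infDist_le_dist_of_mem hu
          _ = ‖u - G u‖ := by rw [dist_comm, dist_eq_norm]
      calc d ≤ c * infDist (G u) (K : Set X) := h1
        _ ≤ c * ‖u - G u‖ := mul_le_mul_of_nonneg_left h2 hc0
    calc ‖u - P u‖ ≤ (1 + ‖P‖) * (‖u - G u‖ + d) := step1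
      _ ≤ (1 + ‖P‖) * (‖u - G u‖ + c * ‖u - G u‖) := by nlinarith
      _ = A * ‖u - G u‖ := by ring
  refine ⟨A * C, A * D, by positivity, by positivity, fun h => by rw [h, mul_zero], ?_⟩
  intro u hu
  calc ENNReal.ofReal ‖u - P u‖ ≤ ENNReal.ofReal (A * ‖u - G u‖) :=
        ENNReal.ofReal_le_ofReal (main u hu)
    _ = ENNReal.ofReal A * ENNReal.ofReal ‖u - G u‖ := ENNReal.ofReal_mul hA0.le
    _ ≤ ENNReal.ofReal A * (ENNReal.ofReal C * R u + ENNReal.ofReal D) :=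
        mul_le_mul_right (hest u) _
    _ = ENNReal.ofReal (A * C) * R u + ENNReal.ofReal (A * D) := by
        rw [mul_add, ← mul_assoc, ← ENNReal.ofReal_mul hA0.le, ← ENNReal.ofReal_mul hA0.le]
end

section
/- Let X be a reflexive Banach space, R : X → [0,∞] a convex, weakly lower semicontinuous functional, L ⊂ X a finite-dimensional subspace with R(u + v) = R(u) for all u ∈ X, v ∈ L, and suppose there is a bounded linear projection P_L : X → L and constants C > 0, D ≥ 0 with ‖u − P_L u‖ ≤ C R(u) + D for all u. Let Y be a Banach space, K : X → Y bounded linear, and S : Y → [0,∞] proper, convex, weakly lower semicontinuous and coercive (‖vₖ‖_Y → ∞ ⟹ S(vₖ) → ∞). Then for every β > 0 the problem min_{u∈X} S(Ku) + β R(u) admits a minimizer. -/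
open Filter Topology ENNReal

/-- Weak sequential convergence of a sequence in a normed space. -/
def WeakSeqConv {X : Type*} [NormedAddCommGroup X] [NormedSpace ℝ X]
    (u : ℕ → X) (x : X) : Prop :=
  ∀ f : StrongDual ℝ X, Tendsto (fun k => f (u k)) atTop (𝓝 (f x))

/-- Superadditivity of `liminf` in `ℝ≥0∞` (for sequences). -/
lemma ennreal_le_liminf_add {f g : ℕ → ℝ≥0∞} :
    liminf f atTop + liminf g atTop ≤ liminf (fun k => f k + g k) atTop := by
  rw [liminf_eq_iSup_iInf_of_nat, liminf_eq_iSup_iInf_of_nat, liminf_eq_iSup_iInf_of_nat]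
  have hmono : ∀ h : ℕ → ℝ≥0∞, Monotone (fun n => ⨅ k ≥ n, h k) := by
    intro h n m hnm
    exact le_iInf₂ fun k hk => iInf₂_le k (hnm.trans hk)
  rw [ENNReal.iSup_add_iSup_of_monotone (hmono f) (hmono g)]
  exact iSup_mono fun n =>
    le_iInf₂ fun k hk => add_le_add (iInf₂_le k hk) (iInf₂_le k hk)

/-- constant times liminf is at most liminf of the products, in `ℝ≥0∞`. -/
lemma const_mul_liminf_le {g : ℕ → ℝ≥0∞} (c : ℝ≥0∞) :
    c * liminf g atTop ≤ liminf (fun k => c * g k) atTop := by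
  have h := ENNReal.le_liminf_mul (f := atTop) (u := fun _ : ℕ => c) (v := g)
  simpa [liminf_const, Pi.mul_def] using h

set_option maxHeartbeats 1000000 in
/-- abstract form of Theorem 6.1. For a convex, weakly lower
semicontinuous functional `R` on a reflexive space `X` (reflexivity encoded as
sequential weak compactness of bounded sequences), invariant and coercive up to a
finite-dimensional subspace `L`, a bounded linear `K : X → Y` and a proper, convex,
weakly l.s.c., coercive discrepancy `S`, the Tikhonov problem
`min_u S(Ku) + β R(u)` has a minimizer for every `β > 0`. -/
theorem stmt_8 {X Y : Type*}
    [NormedAddCommGroup X] [NormedSpace ℝ X] [CompleteSpace X]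
    [NormedAddCommGroup Y] [NormedSpace ℝ Y] [CompleteSpace Y]
    (hrefl : ∀ u : ℕ → X, (∃ M : ℝ, ∀ k, ‖u k‖ ≤ M) →
      ∃ (φ : ℕ → ℕ) (x : X), StrictMono φ ∧ WeakSeqConv (u ∘ φ) x)
    (R : X → ℝ≥0∞)
    (hRconv : ∀ x y : X, ∀ t : ℝ, 0 ≤ t → t ≤ 1 →
      R (t • x + (1 - t) • y) ≤ ENNReal.ofReal t * R x + ENNReal.ofReal (1 - t) * R y)
    (hRlsc : ∀ (u : ℕ → X) (ulim : X), WeakSeqConv u ulim →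
      R ulim ≤ liminf (fun k => R (u k)) atTop)
    (L : Subspace ℝ X) [FiniteDimensional ℝ L]
    (hRinv : ∀ u : X, ∀ v ∈ L, R (u + v) = R u)
    (PL : X →L[ℝ] X) (hPLmem : ∀ x, PL x ∈ L) (hPLproj : ∀ x ∈ L, PL x = x)
    (C D : ℝ) (hC : 0 < C) (hD : 0 ≤ D)
    (hcoerc : ∀ u : X,
      ENNReal.ofReal ‖u - PL u‖ ≤ ENNReal.ofReal C * R u + ENNReal.ofReal D)
    (K : X →L[ℝ] Y)
    (S : Y → ℝ≥0∞)
    (hSproper : ∃ y : Y, S y ≠ ⊤)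
    (hSconv : ∀ y₁ y₂ : Y, ∀ t : ℝ, 0 ≤ t → t ≤ 1 →
      S (t • y₁ + (1 - t) • y₂) ≤ ENNReal.ofReal t * S y₁ + ENNReal.ofReal (1 - t) * S y₂)
    (hSlsc : ∀ (v : ℕ → Y) (vlim : Y), WeakSeqConv v vlim →
      S vlim ≤ liminf (fun k => S (v k)) atTop)
    (hScoerc : ∀ v : ℕ → Y, Tendsto (fun k => ‖v k‖) atTop atTop →
      Tendsto (fun k => S (v k)) atTop (𝓝 ⊤))
    (β : ℝ) (hβ : 0 < β) :
    ∃ u : X, ∀ v : X,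
      S (K u) + ENNReal.ofReal β * R u ≤ S (K v) + ENNReal.ofReal β * R v := by
  classical
  set F : X → ℝ≥0∞ := fun u => S (K u) + ENNReal.ofReal β * R u with hFdef
  show ∃ u : X, ∀ v : X, F u ≤ F v
  set m : ℝ≥0∞ := ⨅ u, F u with hmdef
  by_cases hm : m = ⊤
  · refine ⟨0, fun v => ?_⟩
    have hv : F v = ⊤ := top_unique (hm ▸ iInf_le F v)
    rw [hv]; exact le_top
  -- minimizing sequence
  have hseq : ∀ k : ℕ, ∃ u : X, F u < m + ((k : ℝ≥0∞) + 1)⁻¹ := by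
    intro k
    have h1 : m < m + ((k : ℝ≥0∞) + 1)⁻¹ := by
      refine ENNReal.lt_add_right hm ?_
      simp
    exact iInf_lt_iff.mp h1
  choose u hu using hseq
  have hFle : ∀ k, F (u k) ≤ m + 1 := by
    intro k
    refine (hu k).le.trans (add_le_add_right ?_ m)
    rw [ENNReal.inv_le_one]
    exact le_add_self
  have hm1 : m + 1 ≠ ⊤ := by
    simp [ENNReal.add_ne_top, hm]
  -- bound on R
  have hβ0 : ENNReal.ofReal β ≠ 0 := (ENNReal.ofReal_pos.2 hβ).ne'
  set Br : ℝ≥0∞ := (m + 1) / ENNReal.ofReal β with hBrdef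
  have hRle : ∀ k, R (u k) ≤ Br := by
    intro k
    rw [hBrdef, ENNReal.le_div_iff_mul_le (Or.inl hβ0) (Or.inl ENNReal.ofReal_ne_top)]
    calc R (u k) * ENNReal.ofReal β = ENNReal.ofReal β * R (u k) := mul_comm _ _
      _ ≤ F (u k) := le_add_self
      _ ≤ m + 1 := hFle k
  have hBrne : Br ≠ ⊤ := (ENNReal.div_lt_top hm1 hβ0).ne
  -- bound on ‖u k - PL (u k)‖
  set A : ℝ≥0∞ := ENNReal.ofReal C * Br + ENNReal.ofReal D with hAdef
  have hAne : A ≠ ⊤ := by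
    rw [hAdef]
    exact ENNReal.add_ne_top.2 ⟨ENNReal.mul_ne_top ENNReal.ofReal_ne_top hBrne,
      ENNReal.ofReal_ne_top⟩
  have hw : ∀ k, ‖u k - PL (u k)‖ ≤ A.toReal := by
    intro k
    rw [← ENNReal.ofReal_le_iff_le_toReal hAne]
    exact (hcoerc (u k)).trans (add_le_add_left (mul_le_mul_right (hRle k) _) _)
  -- bound on S ∘ K ∘ u and then on ‖K (u k)‖
  have hSle : ∀ k, S (K (u k)) ≤ m + 1 := fun k => le_self_add.trans (hFle k)
  have hKbdd : ∃ MK : ℝ, ∀ k, ‖K (u k)‖ ≤ MK := by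
    by_contra hcon
    push_neg at hcon
    choose g hg using fun n : ℕ => hcon n
    have htend : Tendsto (fun n => ‖K (u (g n))‖) atTop atTop :=
      tendsto_atTop_mono (fun n => (hg n).le) tendsto_natCast_atTop_atTop
    have hS := hScoerc (fun n => K (u (g n))) htend
    have hev : ∀ᶠ n in atTop, S (K (u (g n))) ∈ Set.Ioi (m + 1) :=
      hS (Ioi_mem_nhds (lt_top_iff_ne_top.2 hm1))
    obtain ⟨n, hn⟩ := hev.exists
    exact absurd (hSle (g n)) (not_le.2 hn)
  obtain ⟨MK, hMK⟩ := hKbdd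
  -- finite-dimensional kernel decomposition
  set T : L →ₗ[ℝ] Y := K.toLinearMap.comp L.subtype with hTdef
  obtain ⟨Mc, hMc⟩ := (LinearMap.ker T).exists_isCompl
  set prN : L →ₗ[ℝ] ↥(LinearMap.ker T) :=
    (LinearMap.ker T).projectionOnto Mc hMc with hprN
  set prM : L →ₗ[ℝ] ↥Mc := Mc.projectionOnto (LinearMap.ker T) hMc.symm with hprM
  set Tm : ↥Mc →ₗ[ℝ] Y := T.comp Mc.subtype with hTm
  have hTminj : Function.Injective Tm := by
    rw [← LinearMap.ker_eq_bot]
    refine (Submodule.eq_bot_iff _).2 fun x hx => ?_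
    have hker : (x : L) ∈ LinearMap.ker T := hx
    have hmem : (x : L) ∈ Mc := x.2
    have : (x : L) = 0 := Submodule.disjoint_def.mp hMc.disjoint _ hker hmem
    exact Subtype.ext this
  set e := LinearEquiv.ofInjective Tm hTminj with hedef
  haveI : FiniteDimensional ℝ ↥(LinearMap.range Tm) :=
    LinearEquiv.finiteDimensional e
  set ginv : ↥(LinearMap.range Tm) →L[ℝ] ↥Mc :=
    LinearMap.toContinuousLinearMap e.symm.toLinearMap with hginv
  -- the sequence in L
  set p : ℕ → L := fun k => ⟨PL (u k), hPLmem (u k)⟩ with hpdef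
  set nn : ℕ → X := fun k => ((prN (p k) : L) : X) with hnndef
  set mm : ℕ → ↥Mc := fun k => prM (p k) with hmmdef
  have hnnL : ∀ k, nn k ∈ L := fun k => SetLike.coe_mem _
  have hKnn : ∀ k, K (nn k) = 0 := by
    intro k
    have h0 : T ((prN (p k) : L)) = 0 := (prN (p k)).2
    exact h0
  have hsplit : ∀ k, PL (u k) = nn k + ((mm k : L) : X) := by
    intro k
    have h := Submodule.projection_add_projection_eq_self hMc (p k)
    have h2 : ((prN (p k) : L) + (prM (p k) : L) : L) = p k := by exact_mod_cast h
    calc PL (u k) = ((p k : L) : X) := rfl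
      _ = (((prN (p k) : L) + (prM (p k) : L) : L) : X) := by rw [h2]
      _ = nn k + ((mm k : L) : X) := by push_cast; rfl
  -- bound on mm
  have hTmm : ∀ k, Tm (mm k) = K (PL (u k)) := by
    intro k
    have h1 : K (PL (u k)) = K (nn k) + K ((mm k : L) : X) := by
      rw [hsplit k, map_add]
    rw [hKnn k, zero_add] at h1
    rw [h1]; rfl
  have hKPL : ∀ k, ‖K (PL (u k))‖ ≤ MK + ‖K‖ * A.toReal := by
    intro k
    have : K (PL (u k)) = K (u k) - K (u k - PL (u k)) := by
      rw [map_sub]; abel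
    rw [this]
    calc ‖K (u k) - K (u k - PL (u k))‖ ≤ ‖K (u k)‖ + ‖K (u k - PL (u k))‖ :=
          norm_sub_le _ _
      _ ≤ MK + ‖K‖ * A.toReal := by
          refine add_le_add (hMK k) ?_
          exact (K.le_opNorm _).trans (by gcongr; exact hw k)
  have hmmnorm : ∀ k, ‖((mm k : L) : X)‖ ≤ ‖ginv‖ * (MK + ‖K‖ * A.toReal) := by
    intro k
    have h1 : ginv (e (mm k)) = mm k := by
      calc ginv (e (mm k)) = e.symm.toLinearMap (e (mm k)) := by
            rw [hginv, LinearMap.coe_toContinuousLinearMap']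
        _ = mm k := e.symm_apply_apply _
    have h2 : ‖(e (mm k) : Y)‖ = ‖Tm (mm k)‖ := by
      rw [LinearEquiv.ofInjective_apply]
    have h3 : ‖mm k‖ ≤ ‖ginv‖ * ‖Tm (mm k)‖ := by
      calc ‖mm k‖ = ‖ginv (e (mm k))‖ := by rw [h1]
        _ ≤ ‖ginv‖ * ‖e (mm k)‖ := ginv.le_opNorm _
        _ = ‖ginv‖ * ‖Tm (mm k)‖ := by rw [← h2]; rfl
    have h4 : ‖((mm k : L) : X)‖ = ‖mm k‖ := rfl
    rw [h4]
    refine h3.trans ?_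
    rw [hTmm k]
    exact mul_le_mul_of_nonneg_left (hKPL k) (ginv.opNorm_nonneg)
  -- shifted minimizing sequence
  set tu : ℕ → X := fun k => u k - nn k with htudef
  have hFtu : ∀ k, F (tu k) = F (u k) := by
    intro k
    have hKtu : K (tu k) = K (u k) := by
      show K (u k - nn k) = K (u k)
      rw [map_sub, hKnn k, sub_zero]
    have hRtu : R (tu k) = R (u k) := by
      have : tu k = u k + (-(nn k)) := by
        show u k - nn k = u k + (-(nn k))
        rw [sub_eq_add_neg]
      rw [this, hRinv (u k) (-(nn k)) (L.neg_mem (hnnL k))]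
    simp only [hFdef, hKtu, hRtu]
  have htubdd : ∃ M : ℝ, ∀ k, ‖tu k‖ ≤ M := by
    refine ⟨A.toReal + ‖ginv‖ * (MK + ‖K‖ * A.toReal), fun k => ?_⟩
    have : tu k = (u k - PL (u k)) + ((mm k : L) : X) := by
      show u k - nn k = (u k - PL (u k)) + ((mm k : L) : X)
      rw [hsplit k]; abel
    rw [this]
    exact (norm_add_le _ _).trans (add_le_add (hw k) (hmmnorm k))
  obtain ⟨φ, x, hφ, hwx⟩ := hrefl tu htubdd
  refine ⟨x, fun v => ?_⟩
  -- lower semicontinuity step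
  have hKw : WeakSeqConv (fun k => K (tu (φ k))) (K x) := by
    intro f
    exact hwx (f.comp K)
  have hS' : S (K x) ≤ liminf (fun k => S (K (tu (φ k)))) atTop := hSlsc _ _ hKw
  have hR' : R x ≤ liminf (fun k => R (tu (φ k))) atTop := hRlsc (tu ∘ φ) x hwx
  have h1 : F x ≤ liminf (fun k => F (tu (φ k))) atTop := by
    calc F x = S (K x) + ENNReal.ofReal β * R x := rfl
      _ ≤ liminf (fun k => S (K (tu (φ k)))) atTop
          + ENNReal.ofReal β * liminf (fun k => R (tu (φ k))) atTop :=
          add_le_add hS' (mul_le_mul_right hR' _)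
      _ ≤ liminf (fun k => S (K (tu (φ k)))) atTop
          + liminf (fun k => ENNReal.ofReal β * R (tu (φ k))) atTop :=
          add_le_add_right (const_mul_liminf_le _) _
      _ ≤ liminf (fun k => S (K (tu (φ k))) + ENNReal.ofReal β * R (tu (φ k))) atTop :=
          ennreal_le_liminf_add
      _ = liminf (fun k => F (tu (φ k))) atTop := rfl
  -- liminf of minimizing sequence is at most m
  have h2 : liminf (fun k => F (tu (φ k))) atTop ≤ m := by
    have hle : ∀ k, F (tu (φ k)) ≤ m + ((k : ℝ≥0∞) + 1)⁻¹ := by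
      intro k
      rw [hFtu (φ k)]
      refine (hu (φ k)).le.trans (add_le_add_right ?_ m)
      rw [ENNReal.inv_le_inv]
      exact_mod_cast add_le_add_left (Nat.cast_le.2 (hφ.le_apply)) 1
    have hlim : Tendsto (fun k : ℕ => m + ((k : ℝ≥0∞) + 1)⁻¹) atTop (𝓝 m) := by
      have h0 : Tendsto (fun k : ℕ => ((k : ℝ≥0∞) + 1)⁻¹) atTop (𝓝 0) := by
        have h := (ENNReal.tendsto_inv_nat_nhds_zero).comp (tendsto_add_atTop_nat 1)
        have heq : (fun k : ℕ => ((k : ℝ≥0∞) + 1)⁻¹)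
            = (fun n : ℕ => (n : ℝ≥0∞)⁻¹) ∘ (fun n : ℕ => n + 1) := by
          funext k
          simp [Function.comp, Nat.cast_add_one]
        rw [heq]
        exact h
      have := Tendsto.const_add m h0
      simpa using this
    calc liminf (fun k => F (tu (φ k))) atTop
        ≤ liminf (fun k : ℕ => m + ((k : ℝ≥0∞) + 1)⁻¹) atTop :=
          liminf_le_liminf (Eventually.of_forall hle)
      _ = m := hlim.liminf_eq
  exact (h1.trans h2).trans (iInf_le F v)
end

section
/- Let X be a reflexive Banach space and X₀ ⊂ X a Banach space with continuous embedding X₀ ↪ X such that X₀ is reflexive. Let R : X₀ → [0,∞] be convex, weakly lower semicontinuous on X₀, invariant on a finite-dimensional subspace L ⊂ X₀, and satisfy ‖u − P_L u‖_{X₀} ≤ C R(u) + D for a bounded linear projection P_L : X₀ → L. Extend R to X by R(x) = ∞ for x ∈ X \ X₀. Then the extension is convex and lower semicontinuous with respect to weak convergence in X. -/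
open Filter Topology ENNReal

/-- A subsequence of a weakly convergent sequence weakly converges to the same limit. -/
lemma WeakSeqConv.comp_strictMono {X : Type*} [NormedAddCommGroup X] [NormedSpace ℝ X]
    {x : ℕ → X} {a : X} (h : WeakSeqConv x a) {φ : ℕ → ℕ} (hφ : StrictMono φ) :
    WeakSeqConv (fun k => x (φ k)) a :=
  fun f => (h f).comp hφ.tendsto_atTop

/-- Weakly convergent sequences are norm bounded (Banach–Steinhaus). -/
lemma WeakSeqConv.bounded {X : Type*} [NormedAddCommGroup X] [NormedSpace ℝ X]
    {x : ℕ → X} {a : X} (h : WeakSeqConv x a) : ∃ M : ℝ, ∀ k, ‖x k‖ ≤ M := by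
  set g : ℕ → StrongDual ℝ X →L[ℝ] ℝ :=
    fun k => NormedSpace.inclusionInDoubleDual ℝ X (x k) with hg
  have hb : ∀ f : StrongDual ℝ X, ∃ C, ∀ k, ‖g k f‖ ≤ C := by
    intro f
    obtain ⟨C, hC⟩ := (h f).norm.bddAbove_range
    exact ⟨C, fun k => hC ⟨k, rfl⟩⟩
  obtain ⟨C', hC'⟩ := banach_steinhaus hb
  refine ⟨C', fun k => ?_⟩
  have : ‖g k‖ = ‖x k‖ := (NormedSpace.inclusionInDoubleDualLi ℝ (E := X)).norm_map (x k)
  rw [← this]; exact hC' k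

/-- Weak limits are unique. -/
lemma WeakSeqConv.unique {X : Type*} [NormedAddCommGroup X] [NormedSpace ℝ X]
    {x : ℕ → X} {a b : X} (h1 : WeakSeqConv x a) (h2 : WeakSeqConv x b) : a = b := by
  rw [NormedSpace.eq_iff_forall_dual_eq (𝕜 := ℝ)]
  exact fun g => tendsto_nhds_unique (h1 g) (h2 g)

/-- Norm convergence implies weak convergence. -/
lemma WeakSeqConv.of_tendsto {X : Type*} [NormedAddCommGroup X] [NormedSpace ℝ X]
    {x : ℕ → X} {a : X} (h : Tendsto x atTop (𝓝 a)) : WeakSeqConv x a :=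
  fun f => (f.continuous.tendsto a).comp h

/-- abstract version of Proposition 4.7. Let `X₀ ↪ X` via a
continuous injective embedding `ι`, with `X₀` reflexive (encoded as sequential weak
compactness of bounded sequences in `X₀`). If `R : X₀ → [0,∞]` is convex, weakly
sequentially l.s.c. on `X₀`, invariant on a finite-dimensional subspace `L` and
coercive up to `L`, then its extension by `∞` to `X` is convex and sequentially
lower semicontinuous for weak convergence in `X`. -/
theorem stmt_10 {X₀ X : Type*}
    [NormedAddCommGroup X₀] [NormedSpace ℝ X₀] [CompleteSpace X₀]
    [NormedAddCommGroup X] [NormedSpace ℝ X] [CompleteSpace X]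
    (ι : X₀ →L[ℝ] X) (hι : Function.Injective ι)
    (hrefl : ∀ u : ℕ → X₀, (∃ M : ℝ, ∀ k, ‖u k‖ ≤ M) →
      ∃ (φ : ℕ → ℕ) (x : X₀), StrictMono φ ∧ WeakSeqConv (u ∘ φ) x)
    (R : X₀ → ℝ≥0∞)
    (hRconv : ∀ x y : X₀, ∀ t : ℝ, 0 ≤ t → t ≤ 1 →
      R (t • x + (1 - t) • y) ≤ ENNReal.ofReal t * R x + ENNReal.ofReal (1 - t) * R y)
    (hRlsc : ∀ (u : ℕ → X₀) (ulim : X₀), WeakSeqConv u ulim →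
      R ulim ≤ liminf (fun k => R (u k)) atTop)
    (L : Subspace ℝ X₀) [FiniteDimensional ℝ L]
    (hRinv : ∀ u : X₀, ∀ v ∈ L, R (u + v) = R u)
    (PL : X₀ →L[ℝ] X₀) (hPLmem : ∀ x, PL x ∈ L) (hPLproj : ∀ x ∈ L, PL x = x)
    (C D : ℝ) (hC : 0 < C) (hD : 0 ≤ D)
    (hcoerc : ∀ u : X₀,
      ENNReal.ofReal ‖u - PL u‖ ≤ ENNReal.ofReal C * R u + ENNReal.ofReal D)
    (Rext : X → ℝ≥0∞)
    (hRext : ∀ x : X, Rext x = ⨅ (u : X₀) (_ : ι u = x), R u) :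
    (∀ x y : X, ∀ t : ℝ, 0 ≤ t → t ≤ 1 →
      Rext (t • x + (1 - t) • y) ≤
        ENNReal.ofReal t * Rext x + ENNReal.ofReal (1 - t) * Rext y) ∧
    (∀ (x : ℕ → X) (xlim : X), WeakSeqConv x xlim →
      Rext xlim ≤ liminf (fun k => Rext (x k)) atTop) := by
  -- `Rext` agrees with `R` on the image of `ι`
  have hRι : ∀ u : X₀, Rext (ι u) = R u := by
    intro u
    rw [hRext]
    refine le_antisymm (iInf_le_of_le u (iInf_le _ rfl)) (le_iInf₂ fun v hv => ?_)
    rw [hι hv]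
  -- points with finite `Rext` are in the image of `ι`
  have hfin : ∀ x : X, Rext x ≠ ∞ → ∃ u : X₀, ι u = x := by
    intro x hx
    by_contra h
    push_neg at h
    exact hx (by rw [hRext]; exact iInf₂_eq_top.mpr fun u hu => absurd hu (h u))
  constructor
  · -- convexity
    intro x y t ht0 ht1
    rcases eq_or_lt_of_le ht0 with h0 | h0
    · subst h0; simp
    rcases eq_or_lt_of_le ht1 with h1 | h1
    · subst h1; simp
    rcases eq_or_ne (Rext x) ∞ with hx | hx
    · rw [hx, ENNReal.mul_top (ENNReal.ofReal_pos.mpr h0).ne', top_add]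
      exact le_top
    rcases eq_or_ne (Rext y) ∞ with hy | hy
    · rw [hy, ENNReal.mul_top (ENNReal.ofReal_pos.mpr (by linarith : (0:ℝ) < 1 - t)).ne',
        add_top]
      exact le_top
    obtain ⟨u, hu⟩ := hfin x hx
    obtain ⟨v, hv⟩ := hfin y hy
    have heq : t • x + (1 - t) • y = ι (t • u + (1 - t) • v) := by
      rw [map_add, map_smul, map_smul, hu, hv]
    rw [heq, hRι, ← hu, ← hv, hRι, hRι]
    exact hRconv u v t ht0 ht1
  · -- weak sequential lower semicontinuity
    intro x xlim hx
    set A := liminf (fun k => Rext (x k)) atTop with hA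
    rcases eq_or_ne A ∞ with hAtop | hAtop
    · rw [hAtop]; exact le_top
    -- a decreasing vanishing sequence of tolerances
    set ε : ℕ → ℝ≥0∞ := fun n => ((n + 1 : ℕ) : ℝ≥0∞)⁻¹ with hε
    have hεpos : ∀ n, ε n ≠ 0 := fun n => by simp [hε]
    have hεanti : ∀ m n, m ≤ n → ε n ≤ ε m := fun m n h =>
      ENNReal.inv_le_inv.mpr (by exact_mod_cast Nat.succ_le_succ h)
    have hεone : ∀ n, ε n ≤ 1 := fun n =>
      ENNReal.inv_le_one.mpr (by exact_mod_cast Nat.succ_le_succ (Nat.zero_le n))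
    have hεtend : Tendsto ε atTop (𝓝 0) :=
      ENNReal.tendsto_inv_nat_nhds_zero.comp (tendsto_add_atTop_nat 1)
    -- extract a subsequence along which `Rext (x k)` is close to the liminf
    have hfreq : ∀ n, ∃ᶠ k in atTop, Rext (x k) < A + ε n := fun n =>
      frequently_lt_of_liminf_lt (by isBoundedDefault)
        (ENNReal.lt_add_right hAtop (hεpos n))
    obtain ⟨φ, hφ, hφlt⟩ := Filter.extraction_forall_of_frequently hfreq
    -- pull the subsequence back to `X₀`
    have hxfin : ∀ n, ∃ u : X₀, ι u = x (φ n) := fun n =>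
      hfin _ (lt_of_lt_of_le (hφlt n) le_top).ne
    choose u hu using hxfin
    have hRuEq : ∀ n, R (u n) = Rext (x (φ n)) := fun n => by rw [← hu n, hRι]
    have hRu : ∀ n, R (u n) ≤ A + ε n := fun n => (hRuEq n ▸ (hφlt n)).le
    -- the reduced sequence is bounded in `X₀`
    set v : ℕ → X₀ := fun n => u n - PL (u n) with hvdef
    have hKne : ENNReal.ofReal C * (A + 1) + ENNReal.ofReal D ≠ ∞ :=
      ENNReal.add_ne_top.mpr
        ⟨ENNReal.mul_ne_top ENNReal.ofReal_ne_top
          (ENNReal.add_ne_top.mpr ⟨hAtop, ENNReal.one_ne_top⟩), ENNReal.ofReal_ne_top⟩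
    have hvb : ∀ n, ‖v n‖ ≤ (ENNReal.ofReal C * (A + 1) + ENNReal.ofReal D).toReal := by
      intro n
      have h1 : ENNReal.ofReal ‖v n‖ ≤ ENNReal.ofReal C * (A + 1) + ENNReal.ofReal D := by
        refine (hcoerc (u n)).trans ?_
        gcongr
        exact (hRu n).trans (by gcongr; exact hεone n)
      calc ‖v n‖ = (ENNReal.ofReal ‖v n‖).toReal := (ENNReal.toReal_ofReal (norm_nonneg _)).symm
        _ ≤ _ := ENNReal.toReal_mono hKne h1
    obtain ⟨ψ, w, hψ, hw⟩ := hrefl v ⟨_, hvb⟩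
    -- the projected parts weakly converge in `X`
    set p : ℕ → X₀ := fun n => PL (u (ψ n)) with hpdef
    have hpeq : ∀ n, ι (p n) = x (φ (ψ n)) - ι (v (ψ n)) := by
      intro n
      rw [hvdef]
      simp only [map_sub, hu (ψ n)]
      abel
    have hvweak : WeakSeqConv (fun n => ι (v (ψ n))) (ι w) := by
      intro f
      exact hw (f.comp ι)
    have hxsub : WeakSeqConv (fun n => x (φ (ψ n))) xlim :=
      hx.comp_strictMono (hφ.comp hψ)
    have hpweak : WeakSeqConv (fun n => ι (p n)) (xlim - ι w) := by
      intro f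
      have := (hxsub f).sub (hvweak f)
      simpa only [hpeq, map_sub] using this
    obtain ⟨M2, hM2⟩ := hpweak.bounded
    -- pass to a norm-convergent sub-subsequence inside the finite-dimensional image of `L`
    set Msub : Submodule ℝ X := L.map (ι : X₀ →ₗ[ℝ] X) with hMsub
    have hqmem : ∀ n, ι (p n) ∈ Msub := fun n =>
      Submodule.mem_map_of_mem (hPLmem (u (ψ n)))
    set q : ℕ → Msub := fun n => ⟨ι (p n), hqmem n⟩ with hq
    have hqball : ∀ n, q n ∈ Metric.closedBall (0 : Msub) M2 := by
      intro n
      rw [Metric.mem_closedBall, dist_zero_right]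
      exact hM2 n
    obtain ⟨a, -, χ, hχ, hqa⟩ :=
      tendsto_subseq_of_bounded Metric.isBounded_closedBall hqball
    have hcoe : Tendsto (fun n => ι (p (χ n))) atTop (𝓝 (a : X)) :=
      (continuous_subtype_val.tendsto a).comp hqa
    have haweak : WeakSeqConv (fun n => ι (p (χ n))) (a : X) := WeakSeqConv.of_tendsto hcoe
    have haweak' : WeakSeqConv (fun n => ι (p (χ n))) (xlim - ι w) :=
      hpweak.comp_strictMono hχ
    have ha : (a : X) = xlim - ι w := haweak.unique haweak'
    obtain ⟨l, hl, hla⟩ := a.2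
    have hxlim : ι (w + l) = xlim := by
      rw [map_add]
      have : (ι : X₀ →ₗ[ℝ] X) l = ι l := rfl
      rw [this] at hla
      rw [hla, ha]
      abel
    -- conclude via lower semicontinuity of `R`
    have hRvw : R w ≤ liminf (fun k => R (v (ψ k))) atTop := hRlsc _ _ hw
    have hRv : ∀ k, R (v k) = R (u k) := by
      intro k
      have : v k = u k + -(PL (u k)) := by rw [hvdef]; abel
      rw [this, hRinv (u k) _ (neg_mem (hPLmem (u k)))]
    have hlim2 : liminf (fun k => R (v (ψ k))) atTop ≤ A := by
      have h1 : ∀ k, R (v (ψ k)) ≤ A + ε k := fun k =>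
        (hRv (ψ k)) ▸ ((hRu (ψ k)).trans (by gcongr; exact hεanti k (ψ k) (hψ.le_apply)))
      have h2 : liminf (fun k => R (v (ψ k))) atTop ≤ liminf (fun k => A + ε k) atTop :=
        liminf_le_liminf (Eventually.of_forall h1)
      have h3 : Tendsto (fun k => A + ε k) atTop (𝓝 A) := by
        simpa using (tendsto_const_nhds (x := A)).add hεtend
      rw [h3.liminf_eq] at h2
      exact h2
    calc Rext xlim = R (w + l) := by rw [← hxlim, hRι]
      _ = R w := hRinv w l hl
      _ ≤ liminf (fun k => R (v (ψ k))) atTop := hRvw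
      _ ≤ A := hlim2
end

section
/- Let X be a reflexive Banach space, R : X → [0,∞] convex and weakly lower semicontinuous, invariant on a finite-dimensional subspace L with coercivity estimate ‖u − P_L u‖ ≤ C R(u) + D, and let Y be a Banach space, K : X → Y bounded linear, f ∈ Y. Suppose there exists u₀ ∈ X with Ku₀ = f and R(u₀) < ∞. Then the constrained problem min{ R(u) : u ∈ X, Ku = f } admits a minimizer. -/
open Filter Topology ENNReal

/-- existence of `R`-minimizing solutions. Under the usual
structure on `R` (convex, weakly sequentially l.s.c., invariant and coercive up to a
finite-dimensional subspace `L`) on a reflexive space `X`, if the datum `f` is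
attainable with finite `R`-value then `min { R(u) : K u = f }` has a minimizer. -/
theorem stmt_13 {X Y : Type*}
    [NormedAddCommGroup X] [NormedSpace ℝ X] [CompleteSpace X]
    [NormedAddCommGroup Y] [NormedSpace ℝ Y] [CompleteSpace Y]
    (hrefl : ∀ u : ℕ → X, (∃ M : ℝ, ∀ k, ‖u k‖ ≤ M) →
      ∃ (φ : ℕ → ℕ) (x : X), StrictMono φ ∧ WeakSeqConv (u ∘ φ) x)
    (R : X → ℝ≥0∞)
    (hRconv : ∀ x y : X, ∀ t : ℝ, 0 ≤ t → t ≤ 1 →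
      R (t • x + (1 - t) • y) ≤ ENNReal.ofReal t * R x + ENNReal.ofReal (1 - t) * R y)
    (hRlsc : ∀ (u : ℕ → X) (ulim : X), WeakSeqConv u ulim →
      R ulim ≤ liminf (fun k => R (u k)) atTop)
    (L : Subspace ℝ X) [FiniteDimensional ℝ L]
    (hRinv : ∀ u : X, ∀ v ∈ L, R (u + v) = R u)
    (PL : X →L[ℝ] X) (hPLmem : ∀ x, PL x ∈ L) (hPLproj : ∀ x ∈ L, PL x = x)
    (C D : ℝ) (hC : 0 < C) (hD : 0 ≤ D)
    (hcoerc : ∀ u : X,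
      ENNReal.ofReal ‖u - PL u‖ ≤ ENNReal.ofReal C * R u + ENNReal.ofReal D)
    (K : X →L[ℝ] Y) (f : Y)
    (hattain : ∃ u₀ : X, K u₀ = f ∧ R u₀ < ⊤) :
    ∃ u : X, K u = f ∧ ∀ v : X, K v = f → R u ≤ R v := by
  classical
  obtain ⟨u₀, hKu₀, hRu₀⟩ := hattain
  set m : ℝ≥0∞ := ⨅ v : {v : X // K v = f}, R v.1 with hm
  have hmle : ∀ v : X, K v = f → m ≤ R v := fun v hv =>
    iInf_le (fun v : {v : X // K v = f} => R v.1) (⟨v, hv⟩ : {v : X // K v = f})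
  have hmlt : m < ⊤ := lt_of_le_of_lt (hmle u₀ hKu₀) hRu₀
  -- a minimizing sequence
  have hch : ∀ k : ℕ, ∃ u : X, K u = f ∧ R u ≤ m + ((k : ℝ≥0∞) + 1)⁻¹ := by
    intro k
    have hne : ((k : ℝ≥0∞) + 1) ≠ ⊤ :=
      ENNReal.add_ne_top.2 ⟨ENNReal.natCast_ne_top k, ENNReal.one_ne_top⟩
    have hlt : m < m + ((k : ℝ≥0∞) + 1)⁻¹ :=
      ENNReal.lt_add_right hmlt.ne (ENNReal.inv_ne_zero.2 hne)
    rw [hm] at hlt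
    obtain ⟨⟨v, hv⟩, hvlt⟩ := iInf_lt_iff.mp hlt
    exact ⟨v, hv, hvlt.le⟩
  choose u hKu hRu using hch
  -- finite-dimensional decomposition inside L
  set T : L →L[ℝ] Y := K.comp L.subtypeL with hT
  obtain ⟨q', hq'⟩ := Submodule.exists_isCompl (LinearMap.ker (T : ↥L →ₗ[ℝ] Y))
  set S : ↥q' →ₗ[ℝ] Y := ((T : ↥L →ₗ[ℝ] Y).comp q'.subtype) with hS
  have hSker : LinearMap.ker S = ⊥ := by
    rw [LinearMap.ker_eq_bot']
    intro b hb
    have hb1 : (b : ↥L) ∈ LinearMap.ker (T : ↥L →ₗ[ℝ] Y) := hb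
    have hb0 : (b : ↥L) = 0 :=
      (Submodule.disjoint_def.mp hq'.disjoint) (b : ↥L) hb1 b.2
    exact Subtype.ext hb0
  obtain ⟨c, hc0, hcanti⟩ := S.exists_antilipschitzWith hSker
  have hanti : ∀ b : ↥q', ‖((b : ↥L) : X)‖ ≤ (c : ℝ) * ‖S b‖ := by
    intro b
    have h1 := hcanti.le_mul_dist b 0
    simpa [dist_eq_norm] using h1
  -- decompose PL (u k)
  have hdec : ∀ k : ℕ, ∃ (a : ↥(LinearMap.ker (T : ↥L →ₗ[ℝ] Y))) (b : ↥q'),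
      (((a : ↥L) : X)) + (((b : ↥L) : X)) = PL (u k) := by
    intro k
    obtain ⟨a, b, hab, -⟩ :=
      Submodule.existsUnique_add_of_isCompl hq' (⟨PL (u k), hPLmem (u k)⟩ : ↥L)
    exact ⟨a, b, congrArg (Subtype.val) hab⟩
  choose a b hab using hdec
  -- properties of a
  have hKa : ∀ k, K (((a k : ↥L) : X)) = 0 := fun k => (a k).2
  have haL : ∀ k, (((a k : ↥L) : X)) ∈ L := fun k => (a k : ↥L).2
  -- the shifted minimizing sequence
  set w : ℕ → X := fun k => u k - ((a k : ↥L) : X) with hw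
  have hKw : ∀ k, K (w k) = f := by
    intro k
    simp [hw, map_sub, hKa k, hKu k]
  have hRw : ∀ k, R (w k) = R (u k) := by
    intro k
    have h1 : R (w k + ((a k : ↥L) : X)) = R (w k) := hRinv (w k) _ (haL k)
    have h2 : w k + ((a k : ↥L) : X) = u k := by simp [hw]
    rw [h2] at h1
    exact h1.symm
  -- uniform bounds
  have hR1 : ∀ k, R (u k) ≤ m + 1 := by
    intro k
    refine (hRu k).trans (add_le_add_right ?_ m)
    exact ENNReal.inv_le_one.2 (le_add_self)
  set B : ℝ≥0∞ := ENNReal.ofReal C * (m + 1) + ENNReal.ofReal D with hB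
  have hBne : B ≠ ⊤ := by
    rw [hB]
    refine ENNReal.add_ne_top.2 ⟨?_, ENNReal.ofReal_ne_top⟩
    exact ENNReal.mul_ne_top ENNReal.ofReal_ne_top
      (ENNReal.add_ne_top.2 ⟨hmlt.ne, ENNReal.one_ne_top⟩)
  have hbound1 : ∀ k, ‖u k - PL (u k)‖ ≤ B.toReal := by
    intro k
    have h1 : ENNReal.ofReal ‖u k - PL (u k)‖ ≤ B := by
      refine (hcoerc (u k)).trans ?_
      rw [hB]
      exact add_le_add_left (mul_le_mul_right (hR1 k) _) _
    exact (ENNReal.ofReal_le_iff_le_toReal hBne).mp h1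
  have hbound2 : ∀ k, ‖((b k : ↥L) : X)‖ ≤ (c : ℝ) * (‖f‖ + ‖K‖ * B.toReal) := by
    intro k
    refine (hanti (b k)).trans (mul_le_mul_of_nonneg_left ?_ c.2)
    have hSb : S (b k) = K (((b k : ↥L) : X)) := rfl
    have hKb : K (((b k : ↥L) : X)) = f - K (u k - PL (u k)) := by
      have h1 : K (PL (u k)) = K (((a k : ↥L) : X)) + K (((b k : ↥L) : X)) := by
        rw [← map_add, hab k]
      rw [hKa k, zero_add] at h1
      rw [← h1, map_sub, hKu k]
      exact (sub_sub_cancel f _).symm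
    rw [hSb, hKb]
    refine (norm_sub_le _ _).trans ?_
    refine add_le_add le_rfl ?_
    exact (K.le_opNorm _).trans (mul_le_mul_of_nonneg_left (hbound1 k) (norm_nonneg _))
  have hwbound : ∀ k, ‖w k‖ ≤ B.toReal + (c : ℝ) * (‖f‖ + ‖K‖ * B.toReal) := by
    intro k
    have h1 : w k = (u k - PL (u k)) + ((b k : ↥L) : X) := by
      have := hab k
      rw [hw]
      simp only []
      rw [← this]
      abel
    rw [h1]
    exact (norm_add_le _ _).trans (add_le_add (hbound1 k) (hbound2 k))
  -- extract a weakly convergent subsequence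
  obtain ⟨φ, x, hφ, hweak⟩ := hrefl w ⟨_, hwbound⟩
  -- the weak limit is feasible
  have hKx : K x = f := by
    rw [NormedSpace.eq_iff_forall_dual_eq (𝕜 := ℝ)]
    intro g
    have h1 : Tendsto (fun k => (g.comp K) ((w ∘ φ) k)) atTop (𝓝 ((g.comp K) x)) :=
      hweak (g.comp K)
    have h2 : (fun k => (g.comp K) ((w ∘ φ) k)) = fun _ => g f := by
      funext k
      simp [Function.comp, hKw (φ k)]
    rw [h2] at h1
    exact tendsto_nhds_unique h1 tendsto_const_nhds
  -- the weak limit is minimizing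
  have h3 : ∀ k, R ((w ∘ φ) k) ≤ m + ((k : ℝ≥0∞) + 1)⁻¹ := by
    intro k
    have h4 : R ((w ∘ φ) k) = R (u (φ k)) := hRw (φ k)
    rw [h4]
    refine (hRu (φ k)).trans (add_le_add_right ?_ m)
    refine ENNReal.inv_le_inv.2 (add_le_add_left ?_ 1)
    exact_mod_cast hφ.le_apply
  have htends : Tendsto (fun k : ℕ => m + ((k : ℝ≥0∞) + 1)⁻¹) atTop (𝓝 m) := by
    have h5 : Tendsto (fun k : ℕ => ((k : ℝ≥0∞) + 1)⁻¹) atTop (𝓝 0) := by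
      have h6 := ENNReal.tendsto_inv_nat_nhds_zero.comp (tendsto_add_atTop_nat 1)
      have h7 : (fun k : ℕ => ((k : ℝ≥0∞) + 1)⁻¹) =
          (fun n : ℕ => (n : ℝ≥0∞)⁻¹) ∘ (fun n => n + 1) := by
        funext k
        simp [Function.comp]
      rw [h7]
      exact h6
    have := Tendsto.add (tendsto_const_nhds (x := m) (f := atTop)) h5
    simpa using this
  have hlim : R x ≤ m := by
    refine (hRlsc (w ∘ φ) x hweak).trans ?_
    calc liminf (fun k => R ((w ∘ φ) k)) atTop
        ≤ liminf (fun k : ℕ => m + ((k : ℝ≥0∞) + 1)⁻¹) atTop :=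
          liminf_le_liminf (Eventually.of_forall h3)
      _ = m := htends.liminf_eq
  exact ⟨x, hKx, fun v hv => hlim.trans (hmle v hv)⟩
end
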